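/- arXiv:2104.10153 — 3 statements merged into one kernel-verified Lean document; each statement's English description precedes it below -/
import Mathlib

section
/- For any gauge transformation V_t = u_t(⊕_k v_k)u_t† commuting with the Hamiltonian H_t = u_t h_t u_t† (with h_t = ⊕_k ε_k(t) I_{n_k} diagonal), and any density matrix ρ_t, one has Tr[V_t ρ_t V_t† · u_t ḣ_t u_t†] = Tr[ρ_t · u_t ḣ_t u_t†]. In other words, the integrand of the invariant work W_inv is pointwise invariant under the emergent gauge. -/
open Matrix

/-- The integrand of the invariant work is pointwise invariant under the emergent
gauge: for `V = u (⊕_k v_k) u†` with `v_k` unitary, `h = ⊕_k ε_k I_{n_k}`,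
`ḣ = ⊕_k ε̇_k I_{n_k}`, and any matrix `ρ`,
`Tr[V ρ V† · u ḣ u†] = Tr[ρ · u ḣ u†]`. -/
theorem invariant_work_integrand_gauge_invariant {p : ℕ} (n : Fin p → ℕ)
    (ε εdot : Fin p → ℝ)
    (u : Matrix ((k : Fin p) × Fin (n k)) ((k : Fin p) × Fin (n k)) ℂ)
    (hu : u ∈ Matrix.unitaryGroup ((k : Fin p) × Fin (n k)) ℂ)
    (v : (k : Fin p) → Matrix (Fin (n k)) (Fin (n k)) ℂ)
    (hv : ∀ k, v k ∈ Matrix.unitaryGroup (Fin (n k)) ℂ)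
    (V h hdot : Matrix ((k : Fin p) × Fin (n k)) ((k : Fin p) × Fin (n k)) ℂ)
    (hV : V = u * Matrix.blockDiagonal' v * uᴴ)
    (hh : h = Matrix.blockDiagonal'
      (fun k => (ε k : ℂ) • (1 : Matrix (Fin (n k)) (Fin (n k)) ℂ)))
    (hhdot : hdot = Matrix.blockDiagonal'
      (fun k => (εdot k : ℂ) • (1 : Matrix (Fin (n k)) (Fin (n k)) ℂ)))
    (ρ : Matrix ((k : Fin p) × Fin (n k)) ((k : Fin p) × Fin (n k)) ℂ) :
    (V * ρ * Vᴴ * (u * hdot * uᴴ)).trace = (ρ * (u * hdot * uᴴ)).trace := by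
  subst hV hhdot
  set B := Matrix.blockDiagonal' v with hB
  set D := Matrix.blockDiagonal'
      (fun k => (εdot k : ℂ) • (1 : Matrix (Fin (n k)) (Fin (n k)) ℂ)) with hD
  have huu : uᴴ * u = 1 := mem_unitaryGroup_iff'.mp hu
  have huu' : u * uᴴ = 1 := mem_unitaryGroup_iff.mp hu
  have hBH : Bᴴ = Matrix.blockDiagonal' (fun k => (v k)ᴴ) := by
    simp [hB, Matrix.blockDiagonal'_conjTranspose]
  have hBB : Bᴴ * B = 1 := by
    rw [hBH, hB, ← Matrix.blockDiagonal'_mul]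
    have : (fun k => (v k)ᴴ * v k) = fun k => (1 : Matrix (Fin (n k)) (Fin (n k)) ℂ) := by
      funext k
      exact mem_unitaryGroup_iff'.mp (hv k)
    rw [this]
    exact Matrix.blockDiagonal'_one
  have hcomm : D * Bᴴ = Bᴴ * D := by
    rw [hBH, hD, ← Matrix.blockDiagonal'_mul, ← Matrix.blockDiagonal'_mul]
    congr 1
    funext k
    simp [Matrix.smul_mul, Matrix.mul_smul]
  have key : (u * B * uᴴ) * ρ * (u * B * uᴴ)ᴴ * (u * D * uᴴ)
      = u * (B * (uᴴ * ρ * u) * (Bᴴ * D)) * uᴴ := by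
    simp only [Matrix.conjTranspose_mul, Matrix.conjTranspose_conjTranspose]
    calc u * B * uᴴ * ρ * (u * (Bᴴ * uᴴ)) * (u * D * uᴴ)
        = u * (B * ((uᴴ * ρ * u) * (Bᴴ * ((uᴴ * u) * D)))) * uᴴ := by
          simp only [Matrix.mul_assoc]
      _ = u * (B * (uᴴ * ρ * u) * (Bᴴ * D)) * uᴴ := by
          rw [huu]; simp only [Matrix.one_mul, Matrix.mul_assoc]
  rw [key, ← hcomm]
  rw [Matrix.trace_mul_cycle, ← Matrix.mul_assoc, huu, Matrix.one_mul]
  rw [show B * (uᴴ * ρ * u) * (D * Bᴴ) = B * ((uᴴ * ρ * u) * D) * Bᴴ by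
    simp only [Matrix.mul_assoc]]
  rw [Matrix.trace_mul_cycle, ← Matrix.mul_assoc, hBB, Matrix.one_mul]
  simp only [Matrix.mul_assoc]
  rw [Matrix.trace_mul_comm uᴴ]
  simp only [Matrix.mul_assoc]
end

section
/- Let H_t have a nondegenerate spectral decomposition H_t = Σ_k ε_k(t)|a_k(t)⟩⟨a_k(t)| with orthonormal eigenvectors, and write ρ_t = Σ_{jl} c_{jl}(t)|a_j(t)⟩⟨a_l(t)|. Then the coherent heat integrand Tr[ρ_t(u̇_t h_t u_t† + u_t h_t u̇_t†)] equals Σ_{j≠l} c_{jl}(t)⟨ȧ_l(t)|a_j(t)⟩(ε_l(t) − ε_j(t)); in particular the diagonal coefficients c_{jj}(t) do not contribute. -/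
open Matrix ComplexOrder BigOperators

/-- In the instantaneous energy eigenbasis (columns of the unitary `u_t`, with
simple spectrum `ε_k(t)` and `h_t = diag(ε_k(t))`), the coherent heat integrand
`Tr[ρ(u̇ h u† + u h u̇†)]` equals `Σ_{j≠l} c_{jl} ⟨ȧ_l|a_j⟩ (ε_l − ε_j)`,
where `c_{jl} = ⟨a_j|ρ|a_l⟩ = (u† ρ u)_{jl}` and `⟨ȧ_l|a_j⟩ = (u̇† u)_{lj}`;
in particular the diagonal coefficients `c_{jj}` do not contribute. -/
theorem coherent_heat_integrand_only_coherences {d : ℕ}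
    (u u' : ℝ → Matrix (Fin d) (Fin d) ℂ)
    (hu : ∀ s, u s ∈ Matrix.unitaryGroup (Fin d) ℂ)
    (ε : Fin d → ℝ → ℝ) (h : ℝ → Matrix (Fin d) (Fin d) ℂ)
    (hh : ∀ s, h s = Matrix.diagonal (fun k => (ε k s : ℂ)))
    (ρ : Matrix (Fin d) (Fin d) ℂ) (hρ : ρ.PosSemidef) (hρ1 : ρ.trace = 1)
    (t : ℝ)
    (hsimple : Function.Injective (fun k => ε k t))
    (hu' : ∀ i j, HasDerivAt (fun r => u r i j) (u' t i j) t) :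
    (ρ * (u' t * h t * (u t)ᴴ + u t * h t * (u' t)ᴴ)).trace =
      ∑ j, ∑ l, if j ≠ l then
        ((u t)ᴴ * ρ * u t) j l * ((u' t)ᴴ * u t) l j * ((ε l t : ℂ) - (ε j t : ℂ))
      else 0 := by
  classical
  set U := u t with hUdef
  set U' := u' t with hU'def
  have h1 : Uᴴ * U = 1 := by
    have := (hu t).1
    simpa [Matrix.star_eq_conjTranspose] using this
  have h2 : U * Uᴴ = 1 := by
    have := (hu t).2
    simpa [Matrix.star_eq_conjTranspose] using this
  -- derivative of UᴴU = 1 gives U'ᴴU + UᴴU' = 0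
  have hK0 : U'ᴴ * U + Uᴴ * U' = 0 := by
    ext i j
    have hd1 : HasDerivAt (fun s => ∑ k, star (u s k i) * u s k j)
        (∑ k, (star (u' t k i) * u t k j + star (u t k i) * u' t k j)) t :=
      HasDerivAt.fun_sum fun k _ => ((hu' k i).star.mul (hu' k j))
    have hconst : (fun s => ∑ k, star (u s k i) * u s k j)
        = fun _ => (1 : Matrix (Fin d) (Fin d) ℂ) i j := by
      funext s
      have hs : (u s)ᴴ * u s = 1 := by
        have := (hu s).1
        simpa [Matrix.star_eq_conjTranspose] using this
      have := congrFun (congrFun hs i) j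
      simpa [Matrix.mul_apply, Matrix.conjTranspose_apply] using this
    have hd2 : HasDerivAt (fun s => ∑ k, star (u s k i) * u s k j)
        (0 : ℂ) t := by
      rw [hconst]; exact hasDerivAt_const _ _
    have huniq := hd1.unique hd2
    simpa [Matrix.add_apply, Matrix.mul_apply, Matrix.conjTranspose_apply,
      Finset.sum_add_distrib] using huniq
  set C := Uᴴ * ρ * U with hC
  set K := U'ᴴ * U with hKdef
  have hK : Uᴴ * U' = -K := by
    have := hK0
    linear_combination (norm := abel) this
  have hUU' : U * (Uᴴ * U') = U' := by
    rw [← Matrix.mul_assoc, h2, Matrix.one_mul]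
  have e2 : Uᴴ * ρ * U' = -(C * K) := by
    calc Uᴴ * ρ * U' = Uᴴ * ρ * (U * (Uᴴ * U')) := by rw [hUU']
      _ = (Uᴴ * ρ * U) * (Uᴴ * U') := by simp only [Matrix.mul_assoc]
      _ = C * (-K) := by rw [hK, hC]
      _ = -(C * K) := by rw [mul_neg]
  have e1 : U'ᴴ * ρ * U = K * C := by
    calc U'ᴴ * ρ * U = U'ᴴ * ((U * Uᴴ) * ρ) * U := by rw [h2, Matrix.one_mul]
      _ = (U'ᴴ * U) * (Uᴴ * ρ) * U := by rw [Matrix.mul_assoc U, ← Matrix.mul_assoc U'ᴴ, ← Matrix.mul_assoc]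
      _ = K * C := by rw [hKdef, hC, Matrix.mul_assoc K, ← Matrix.mul_assoc]
  -- rewrite the trace
  have htr1 : (ρ * (U' * h t * Uᴴ)).trace = (-(C * K) * h t).trace := by
    rw [← Matrix.mul_assoc, Matrix.trace_mul_cycle, Matrix.mul_assoc Uᴴ ρ, ← Matrix.mul_assoc Uᴴ,
      ← Matrix.mul_assoc, e2]
  have htr2 : (ρ * (U * h t * U'ᴴ)).trace = (K * C * h t).trace := by
    rw [← Matrix.mul_assoc, Matrix.trace_mul_cycle, Matrix.mul_assoc U'ᴴ ρ, ← Matrix.mul_assoc U'ᴴ,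
      ← Matrix.mul_assoc, e1]
  have htr : ∀ M : Matrix (Fin d) (Fin d) ℂ, (M * h t).trace = ∑ i, M i i * (ε i t : ℂ) := by
    intro M
    rw [hh t]
    simp [Matrix.trace, Matrix.diag, Matrix.mul_diagonal]
  rw [mul_add, Matrix.trace_add, htr1, htr2, neg_mul, Matrix.trace_neg, htr, htr]
  have hRHS : ∀ j l : Fin d, (if j ≠ l then C j l * K l j * ((ε l t : ℂ) - (ε j t : ℂ)) else 0)
      = C j l * K l j * ((ε l t : ℂ) - (ε j t : ℂ)) := by
    intro j l
    split
    · rfl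
    · rename_i hjl
      push_neg at hjl
      subst hjl
      simp
  simp only [hRHS, Matrix.mul_apply]
  rw [neg_add_eq_sub]
  rw [show (∑ i, (∑ k, K i k * C k i) * (ε i t : ℂ))
      = ∑ j, ∑ l, C j l * K l j * (ε l t : ℂ) from by
    simp only [Finset.sum_mul]
    rw [Finset.sum_comm]
    exact Finset.sum_congr rfl fun j _ => Finset.sum_congr rfl fun l _ => by ring]
  rw [show (∑ i, (∑ k, C i k * K k i) * (ε i t : ℂ))
      = ∑ j, ∑ l, C j l * K l j * (ε j t : ℂ) from by
    simp only [Finset.sum_mul]]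
  rw [← Finset.sum_sub_distrib]
  refine Finset.sum_congr rfl fun j _ => ?_
  rw [← Finset.sum_sub_distrib]
  exact Finset.sum_congr rfl fun l _ => by ring
end

section
/- Under a gauge transformation ρ_t ↦ V_t ρ_t V_t† with [V_t, H_t] = 0, the usual work rate transforms as Tr[V_t ρ_t V_t† Ḣ_t] = Tr[ρ_t Ḣ_t] + Tr[[H_t, ρ_t] V_t† V̇_t]. In particular, if [H_t, ρ_t] = 0 then the usual work rate is gauge invariant. -/
open Matrix ComplexOrder

/-- Under a gauge transformation `ρ ↦ V_t ρ V_t†` with `[V_t, H_t] = 0`, the usual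
work rate transforms as
`Tr[V ρ V† Ḣ] = Tr[ρ Ḣ] + Tr[[H, ρ] V† V̇]`;
in particular, if `[H_t, ρ] = 0` then the usual work rate is gauge invariant. -/
theorem work_rate_gauge_transformation {d : ℕ}
    (H H' V V' : ℝ → Matrix (Fin d) (Fin d) ℂ)
    (hHherm : ∀ s, (H s).IsHermitian)
    (hV : ∀ s, V s ∈ Matrix.unitaryGroup (Fin d) ℂ)
    (hcomm : ∀ s, V s * H s = H s * V s)
    (ρ : Matrix (Fin d) (Fin d) ℂ) (hρ : ρ.PosSemidef) (hρ1 : ρ.trace = 1)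
    (t : ℝ)
    (hH' : ∀ i j, HasDerivAt (fun r => H r i j) (H' t i j) t)
    (hV' : ∀ i j, HasDerivAt (fun r => V r i j) (V' t i j) t) :
    ((V t * ρ * (V t)ᴴ) * H' t).trace =
      (ρ * H' t).trace + ((H t * ρ - ρ * H t) * ((V t)ᴴ * V' t)).trace ∧
    (H t * ρ = ρ * H t → ((V t * ρ * (V t)ᴴ) * H' t).trace = (ρ * H' t).trace) := by
  -- unitarity
  have hU : (V t)ᴴ * V t = 1 := by
    have := (Matrix.mem_unitaryGroup_iff'.mp (hV t))
    simpa [Matrix.star_eq_conjTranspose] using this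
  -- Vᴴ commutes with H
  have hVH : (V t)ᴴ * H t = H t * (V t)ᴴ := by
    have := congrArg Matrix.conjTranspose (hcomm t)
    simpa [Matrix.conjTranspose_mul, (hHherm t).eq] using this.symm
  -- differentiate V H = H V
  have key : V' t * H t + V t * H' t = H' t * V t + H t * V' t := by
    ext i j
    have h1 : HasDerivAt (fun r => (V r * H r) i j)
        ((V' t * H t + V t * H' t) i j) t := by
      have : HasDerivAt (fun r => ∑ k, V r i k * H r k j)
          (∑ k, (V' t i k * H t k j + V t i k * H' t k j)) t :=
        HasDerivAt.fun_sum fun k _ => (hV' i k).mul (hH' k j)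
      simpa [Matrix.mul_apply, Matrix.add_apply, Finset.sum_add_distrib] using this
    have h2 : HasDerivAt (fun r => (H r * V r) i j)
        ((H' t * V t + H t * V' t) i j) t := by
      have : HasDerivAt (fun r => ∑ k, H r i k * V r k j)
          (∑ k, (H' t i k * V t k j + H t i k * V' t k j)) t :=
        HasDerivAt.fun_sum fun k _ => (hH' i k).mul (hV' k j)
      simpa [Matrix.mul_apply, Matrix.add_apply, Finset.sum_add_distrib] using this
    have heq : (fun r => (V r * H r) i j) = fun r => (H r * V r) i j := by
      funext r; rw [hcomm r]
    exact h1.unique (heq ▸ h2)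
  have h1 : H' t * V t = V' t * H t + V t * H' t - H t * V' t := by
    rw [eq_sub_iff_add_eq]; exact key.symm
  have h2 : (V t)ᴴ * (H' t * V t) =
      (V t)ᴴ * V' t * H t + H' t - H t * ((V t)ᴴ * V' t) := by
    rw [h1, mul_sub, mul_add]
    rw [← mul_assoc ((V t)ᴴ) (V t) (H' t), hU, one_mul,
      ← mul_assoc ((V t)ᴴ) (H t) (V' t), hVH, mul_assoc,
      ← mul_assoc ((V t)ᴴ) (V' t) (H t)]
  have hmain : ((V t * ρ * (V t)ᴴ) * H' t).trace =
      (ρ * H' t).trace + ((H t * ρ - ρ * H t) * ((V t)ᴴ * V' t)).trace := by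
    have e1 : ((V t * ρ * (V t)ᴴ) * H' t).trace
        = (ρ * ((V t)ᴴ * (H' t * V t))).trace := by
      have r1 : V t * ρ * (V t)ᴴ * H' t = V t * (ρ * ((V t)ᴴ * H' t)) := by
        noncomm_ring
      rw [r1, Matrix.trace_mul_comm]
      congr 1
      noncomm_ring
    rw [e1, h2]
    have e2 : ρ * ((V t)ᴴ * V' t * H t + H' t - H t * ((V t)ᴴ * V' t))
        = (ρ * ((V t)ᴴ * V' t) * H t + ρ * H' t) - ρ * H t * ((V t)ᴴ * V' t) := by
      simp [Matrix.mul_add, Matrix.mul_sub, mul_assoc]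
    rw [e2, Matrix.trace_sub, Matrix.trace_add]
    have e3 : (ρ * ((V t)ᴴ * V' t) * H t).trace = (H t * ρ * ((V t)ᴴ * V' t)).trace := by
      rw [Matrix.trace_mul_comm (ρ * ((V t)ᴴ * V' t)) (H t)]; congr 1; noncomm_ring
    rw [e3, Matrix.sub_mul, Matrix.trace_sub]
    ring
  refine ⟨hmain, fun hc => ?_⟩
  rw [hmain, hc, sub_self, Matrix.zero_mul, Matrix.trace_zero, add_zero]
end
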